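/- arXiv:2307.00674 — 6 statements merged into one kernel-verified Lean document; each statement's English description precedes it below -/
import Mathlib

section
/- Given a fixed 2-element subset S of {1,2,3,4} assigned to a 2-edge, there are exactly 2 ordered pairs of 1-element subsets whose union is S; consequently, a web consisting of a 2-edge with a digon of two parallel 1-edges inserted has exactly twice as many colorings as the same web with the digon replaced by a 2-edge. -/
/-- For a fixed 2-element subset `S` of the pigment set, there are exactly 2
ordered pairs of 1-element subsets whose union is `S`; consequently (summing
over all possible colors `S` of the 2-strand, weighted by the number `w S` of
colorings of the rest of the web), a web with a digon of two parallel 1-edges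
inserted in a 2-edge has exactly twice as many colorings as the web with the
digon replaced by a 2-edge. -/
theorem digon_two_thin_edges_doubling :
    (∀ S : Finset (Fin 4), S.card = 2 →
      (Finset.univ.filter (fun p : Fin 4 × Fin 4 =>
        ({p.1} ∪ {p.2} : Finset (Fin 4)) = S)).card = 2) ∧
    (∀ w : Finset (Fin 4) → ℕ,
      ∑ S ∈ Finset.powersetCard 2 (Finset.univ : Finset (Fin 4)),
        w S * (Finset.univ.filter (fun p : Fin 4 × Fin 4 =>
          ({p.1} ∪ {p.2} : Finset (Fin 4)) = S)).card
      = 2 * ∑ S ∈ Finset.powersetCard 2 (Finset.univ : Finset (Fin 4)), w S) := by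
  have h : ∀ S : Finset (Fin 4), S.card = 2 →
      (Finset.univ.filter (fun p : Fin 4 × Fin 4 =>
        ({p.1} ∪ {p.2} : Finset (Fin 4)) = S)).card = 2 := by decide
  refine ⟨h, fun w => ?_⟩
  rw [Finset.mul_sum]
  refine Finset.sum_congr rfl fun S hS => ?_
  rw [Finset.mem_powersetCard] at hS
  rw [h S hS.2, mul_comm]
end

section
/- Over F_2, for a Young diagram λ = (λ_1, λ_2) with λ_1 ≥ λ_2 ≥ 2, the sum over unordered pairs {i,j} ⊂ {1,2,3,4} of s_λ(X_i, X_j) / ((X_i+X_k)(X_i+X_l)(X_j+X_k)(X_j+X_l)) (where {i,j,k,l} = {1,2,3,4}) equals the Schur polynomial s_{(λ_1-2, λ_2-2)} in the four variables X_1,...,X_4; and if λ_2 ≤ 1 the sum equals 0. -/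
open MvPolynomial

noncomputable section

/-- The image of `Xᵢ` in the field of rational functions over `F₂[X₁,…,X₄]`. -/
def x (i : Fin 4) : FractionRing (MvPolynomial (Fin 4) (ZMod 2)) :=
  algebraMap (MvPolynomial (Fin 4) (ZMod 2)) _ (X i)

/-- The two-variable Schur polynomial `s_{(l₁,l₂)}(u,v)` over `F₂`:
`(u^{l₁+1} v^{l₂} + u^{l₂} v^{l₁+1})/(u+v)`. -/
def schur2 (l1 l2 : ℕ) (u v : FractionRing (MvPolynomial (Fin 4) (ZMod 2))) :
    FractionRing (MvPolynomial (Fin 4) (ZMod 2)) :=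
  (u ^ (l1 + 1) * v ^ l2 + u ^ l2 * v ^ (l1 + 1)) / (u + v)

/-- The four-variable Schur polynomial `s_{(m₁,m₂,0,0)}` given by the ratio of
alternants (bialternant formula); over a field of characteristic two signs are
irrelevant. -/
def schur4 (m1 m2 : ℕ) : FractionRing (MvPolynomial (Fin 4) (ZMod 2)) :=
  Matrix.det (Matrix.of fun i j : Fin 4 => x i ^ ((![m1, m2, 0, 0] : Fin 4 → ℕ) j + (3 - (j : ℕ)))) /
    Matrix.det (Matrix.of fun i j : Fin 4 => x i ^ (3 - (j : ℕ)))

/-- The thick-sphere evaluation: the sum over unordered pairs `{i,j}` of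
pigments of `s_λ(Xᵢ,Xⱼ)/((Xᵢ+Xₖ)(Xᵢ+Xₗ)(Xⱼ+Xₖ)(Xⱼ+Xₗ))` where `{k,l}` is the
complement of `{i,j}`. -/
def thickSphereEval (l1 l2 : ℕ) : FractionRing (MvPolynomial (Fin 4) (ZMod 2)) :=
  ∑ p ∈ Finset.univ.filter (fun p : Fin 4 × Fin 4 => p.1 < p.2),
    schur2 l1 l2 (x p.1) (x p.2) /
      ∏ m ∈ (Finset.univ : Finset (Fin 4)) \ {p.1, p.2}, ((x p.1 + x m) * (x p.2 + x m))

section Aux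

set_option maxHeartbeats 4000000
set_option synthInstance.maxHeartbeats 400000

local notation "K" => FractionRing (MvPolynomial (Fin 4) (ZMod 2))

instance auxCharTwo : CharP (FractionRing (MvPolynomial (Fin 4) (ZMod 2))) 2 :=
  charP_of_injective_algebraMap
    (IsFractionRing.injective (MvPolynomial (Fin 4) (ZMod 2)) (FractionRing (MvPolynomial (Fin 4) (ZMod 2)))) 2

lemma auxTwoEqZero : (2 : K) = 0 := by
  have := CharP.cast_eq_zero K 2
  exact_mod_cast this

lemma auxXne {i j : Fin 4} (h : i ≠ j) : x i + x j ≠ 0 := by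
  unfold x
  rw [← RingHom.map_add]
  intro hc
  have h0 : (X i + X j : MvPolynomial (Fin 4) (ZMod 2)) = 0 :=
    IsFractionRing.injective (MvPolynomial (Fin 4) (ZMod 2)) K
      (by rw [hc, RingHom.map_zero])
  have := congrArg (coeff (Finsupp.single i 1)) h0
  rw [coeff_add, coeff_X, coeff_X',
    if_neg (show ¬ (Finsupp.single j 1 : Fin 4 →₀ ℕ) = Finsupp.single i 1 from by simp [Finsupp.single_left_inj, Ne.symm h]), coeff_zero] at this
  simp at this

/-- The Vandermonde-type denominator. -/
def auxD : K :=
  (x 0 + x 1) * (x 0 + x 2) * (x 0 + x 3) * (x 1 + x 2) * (x 1 + x 3) * (x 2 + x 3)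

lemma auxDne : auxD ≠ 0 := by
  unfold auxD
  exact mul_ne_zero (mul_ne_zero (mul_ne_zero (mul_ne_zero (mul_ne_zero
    (auxXne (by decide)) (auxXne (by decide))) (auxXne (by decide)))
    (auxXne (by decide))) (auxXne (by decide))) (auxXne (by decide))

/-- Numerator of one summand. -/
def auxT (l1 l2 : ℕ) (i j : Fin 4) : K :=
  x i ^ (l1 + 1) * x j ^ l2 + x i ^ l2 * x j ^ (l1 + 1)

/-- Total numerator. -/
def auxN (l1 l2 : ℕ) : K :=
  auxT l1 l2 0 1 * (x 2 + x 3) + auxT l1 l2 0 2 * (x 1 + x 3) +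
  auxT l1 l2 0 3 * (x 1 + x 2) + auxT l1 l2 1 2 * (x 0 + x 3) +
  auxT l1 l2 1 3 * (x 0 + x 2) + auxT l1 l2 2 3 * (x 0 + x 1)

lemma auxSummand (l1 l2 : ℕ) (i j k l : Fin 4) (hij : i ≠ j) (hik : i ≠ k)
    (hil : i ≠ l) (hjk : j ≠ k) (hjl : j ≠ l) (hkl : k ≠ l)
    (hperm : (x i + x j) * ((x i + x k) * (x j + x k) * ((x i + x l) * (x j + x l))) * (x k + x l) = auxD) :
    schur2 l1 l2 (x i) (x j) / ((x i + x k) * (x j + x k) * ((x i + x l) * (x j + x l)))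
      = auxT l1 l2 i j * (x k + x l) / auxD := by
  have h1 : (x i + x j) * ((x i + x k) * (x j + x k) * ((x i + x l) * (x j + x l))) ≠ 0 :=
    mul_ne_zero (auxXne hij) (mul_ne_zero (mul_ne_zero (auxXne hik) (auxXne hjk))
      (mul_ne_zero (auxXne hil) (auxXne hjl)))
  rw [schur2, div_div, div_eq_div_iff h1 auxDne, ← hperm, auxT]
  ring

lemma auxEvalEq (l1 l2 : ℕ) : thickSphereEval l1 l2 = auxN l1 l2 / auxD := by
  have key : ∀ f : Fin 4 × Fin 4 → K,
      ∑ p ∈ Finset.univ.filter (fun p : Fin 4 × Fin 4 => p.1 < p.2), f p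
        = f (0,1) + f (0,2) + f (0,3) + f (1,2) + f (1,3) + f (2,3) := by
    intro f
    rw [show (Finset.univ.filter (fun p : Fin 4 × Fin 4 => p.1 < p.2)) =
      {(0,1),(0,2),(0,3),(1,2),(1,3),(2,3)} from by decide]
    simp [Finset.sum_insert, Finset.mem_insert]
    ring
  rw [thickSphereEval, key]
  rw [show ((Finset.univ : Finset (Fin 4)) \ {(0:Fin 4),(1:Fin 4)}) = {2,3} from by decide,
      show ((Finset.univ : Finset (Fin 4)) \ {(0:Fin 4),(2:Fin 4)}) = {1,3} from by decide,
      show ((Finset.univ : Finset (Fin 4)) \ {(0:Fin 4),(3:Fin 4)}) = {1,2} from by decide,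
      show ((Finset.univ : Finset (Fin 4)) \ {(1:Fin 4),(2:Fin 4)}) = {0,3} from by decide,
      show ((Finset.univ : Finset (Fin 4)) \ {(1:Fin 4),(3:Fin 4)}) = {0,2} from by decide,
      show ((Finset.univ : Finset (Fin 4)) \ {(2:Fin 4),(3:Fin 4)}) = {0,1} from by decide]
  simp only [Finset.prod_insert (by decide : (2:Fin 4) ∉ ({3} : Finset (Fin 4))),
    Finset.prod_insert (by decide : (1:Fin 4) ∉ ({3} : Finset (Fin 4))),
    Finset.prod_insert (by decide : (1:Fin 4) ∉ ({2} : Finset (Fin 4))),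
    Finset.prod_insert (by decide : (0:Fin 4) ∉ ({3} : Finset (Fin 4))),
    Finset.prod_insert (by decide : (0:Fin 4) ∉ ({2} : Finset (Fin 4))),
    Finset.prod_insert (by decide : (0:Fin 4) ∉ ({1} : Finset (Fin 4))),
    Finset.prod_singleton]
  rw [auxSummand l1 l2 0 1 2 3 (by decide) (by decide) (by decide) (by decide) (by decide) (by decide) (by rw [auxD]; ring),
      auxSummand l1 l2 0 2 1 3 (by decide) (by decide) (by decide) (by decide) (by decide) (by decide) (by rw [auxD]; ring),
      auxSummand l1 l2 0 3 1 2 (by decide) (by decide) (by decide) (by decide) (by decide) (by decide) (by rw [auxD]; ring),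
      auxSummand l1 l2 1 2 0 3 (by decide) (by decide) (by decide) (by decide) (by decide) (by decide) (by rw [auxD]; ring),
      auxSummand l1 l2 1 3 0 2 (by decide) (by decide) (by decide) (by decide) (by decide) (by decide) (by rw [auxD]; ring),
      auxSummand l1 l2 2 3 0 1 (by decide) (by decide) (by decide) (by decide) (by decide) (by decide) (by rw [auxD]; ring)]
  rw [← add_div, ← add_div, ← add_div, ← add_div,
    ← add_div, auxN]

theorem auxDetFinFour {R : Type*} [CommRing R] (A : Matrix (Fin 4) (Fin 4) R) :
    A.det = A 0 0*A 1 1*A 2 2*A 3 3 - A 0 0*A 1 1*A 2 3*A 3 2 - A 0 0*A 1 2*A 2 1*A 3 3 + A 0 0*A 1 2*A 2 3*A 3 1 + A 0 0*A 1 3*A 2 1*A 3 2 - A 0 0*A 1 3*A 2 2*A 3 1 - A 0 1*A 1 0*A 2 2*A 3 3 + A 0 1*A 1 0*A 2 3*A 3 2 + A 0 1*A 1 2*A 2 0*A 3 3 - A 0 1*A 1 2*A 2 3*A 3 0 - A 0 1*A 1 3*A 2 0*A 3 2 + A 0 1*A 1 3*A 2 2*A 3 0 + A 0 2*A 1 0*A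 2 1*A 3 3 - A 0 2*A 1 0*A 2 3*A 3 1 - A 0 2*A 1 1*A 2 0*A 3 3 + A 0 2*A 1 1*A 2 3*A 3 0 + A 0 2*A 1 3*A 2 0*A 3 1 - A 0 2*A 1 3*A 2 1*A 3 0 - A 0 3*A 1 0*A 2 1*A 3 2 + A 0 3*A 1 0*A 2 2*A 3 1 + A 0 3*A 1 1*A 2 0*A 3 2 - A 0 3*A 1 1*A 2 2*A 3 0 - A 0 3*A 1 2*A 2 0*A 3 1 + A 0 3*A 1 2*A 2 1*A 3 0 := by
  rw [Matrix.det_succ_row_zero]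
  simp only [Fin.sum_univ_four, Matrix.det_fin_three, Matrix.submatrix_apply,
    (by decide : ((0:Fin 4).succAbove 0) = 1), (by decide : ((0:Fin 4).succAbove 1) = 2),
    (by decide : ((0:Fin 4).succAbove 2) = 3),
    (by decide : ((1:Fin 4).succAbove 0) = 0), (by decide : ((1:Fin 4).succAbove 1) = 2),
    (by decide : ((1:Fin 4).succAbove 2) = 3),
    (by decide : ((2:Fin 4).succAbove 0) = 0), (by decide : ((2:Fin 4).succAbove 1) = 1),
    (by decide : ((2:Fin 4).succAbove 2) = 3),
    (by decide : ((3:Fin 4).succAbove 0) = 0), (by decide : ((3:Fin 4).succAbove 1) = 1),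
    (by decide : ((3:Fin 4).succAbove 2) = 2),
    (by decide : (Fin.succ (0:Fin 3)) = (1 : Fin 4)), (by decide : (Fin.succ (1:Fin 3)) = (2 : Fin 4)),
    (by decide : (Fin.succ (2:Fin 3)) = (3 : Fin 4)),
    Fin.val_zero, Fin.val_one, Fin.val_two, (show ((3:Fin 4):ℕ) = 3 by rfl), pow_zero, pow_one]
  norm_num
  ring

lemma auxDetD :
    Matrix.det (Matrix.of fun i j : Fin 4 => x i ^ (3 - (j : ℕ))) = auxD := by
  rw [auxDetFinFour]
  simp only [Matrix.of_apply]
  norm_num [(show ((3:Fin 4):ℕ) = 3 from rfl)]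
  simp only [CharTwo.sub_eq_add]
  rw [auxD]
  linear_combination (-(x 1 ^ 2*x 2 ^ 2*x 3 ^ 2 + x 0 ^ 1*x 1 ^ 1*x 2 ^ 1*x 3 ^ 3 + 2 * (x 0 ^ 1*x 1 ^ 1*x 2 ^ 2*x 3 ^ 2) + x 0 ^ 1*x 1 ^ 1*x 2 ^ 3*x 3 ^ 1 + 2 * (x 0 ^ 1*x 1 ^ 2*x 2 ^ 1*x 3 ^ 2) + 2 * (x 0 ^ 1*x 1 ^ 2*x 2 ^ 2*x 3 ^ 1) + x 0 ^ 1*x 1 ^ 3*x 2 ^ 1*x 3 ^ 1 + x 0 ^ 2*x 2 ^ 2*x 3 ^ 2 + 2 * (x 0 ^ 2*x 1 ^ 1*x 2 ^ 1*x 3 ^ 2) + 2 * (x 0 ^ 2*x 1 ^ 1*x 2 ^ 2*x 3 ^ 1) + x 0 ^ 2*x 1 ^ 2*x 3 ^ 2 + 2 * (x 0 ^ 2*x 1 ^ 2*x 2 ^ 1*x 3 ^ 1) + x 0 ^ 2*x 1 ^ 2*x 2 ^ 2 + x 0 ^ 3*x 1 ^ 1*x 2 ^ 1*x 3 ^ 1))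 * auxTwoEqZero

end Aux

set_option maxHeartbeats 4000000 in
/-- Over `F₂`, for a Young diagram `λ = (λ₁, λ₂)` with `λ₁ ≥ λ₂`: if `λ₂ ≥ 2`,
the thick sphere evaluation equals the Schur polynomial `s_{(λ₁-2, λ₂-2)}` in
four variables, and if `λ₂ ≤ 1`, it equals `0`. -/
theorem thick_sphere_evaluation (l1 l2 : ℕ) (h : l2 ≤ l1) :
    (2 ≤ l2 → thickSphereEval l1 l2 = schur4 (l1 - 2) (l2 - 2)) ∧
    (l2 ≤ 1 → thickSphereEval l1 l2 = 0) := by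
  constructor
  · intro h2
    rw [auxEvalEq, schur4, auxDetD]
    congr 1
    have e0 : l1 - 2 + 3 = l1 + 1 := by omega
    have e1 : l2 - 2 + 2 = l2 := by omega
    rw [auxDetFinFour]
    simp only [Matrix.of_apply, Matrix.cons_val_zero, Matrix.cons_val_one, Matrix.head_cons,
      Matrix.cons_val_two, Matrix.tail_cons, Matrix.cons_val_three]
    norm_num [(show ((3:Fin 4):ℕ) = 3 from rfl)]
    simp only [CharTwo.sub_eq_add]
    rw [e0, e1, auxN, auxT, auxT, auxT, auxT, auxT, auxT]
    ring
  · intro h1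
    rw [auxEvalEq]
    have hN : auxN l1 l2 = 0 := by
      interval_cases l2
      · unfold auxN auxT
        linear_combination (x 0 ^ (l1+1) * (x 1 + x 2 + x 3) + x 1 ^ (l1+1) * (x 0 + x 2 + x 3)
          + x 2 ^ (l1+1) * (x 0 + x 1 + x 3) + x 3 ^ (l1+1) * (x 0 + x 1 + x 2)) * auxTwoEqZero
      · unfold auxN auxT
        linear_combination (x 0 ^ (l1+1) * (x 1 * x 2 + x 1 * x 3 + x 2 * x 3)
          + x 1 ^ (l1+1) * (x 0 * x 2 + x 0 * x 3 + x 2 * x 3)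
          + x 2 ^ (l1+1) * (x 0 * x 1 + x 0 * x 3 + x 1 * x 3)
          + x 3 ^ (l1+1) * (x 0 * x 1 + x 0 * x 2 + x 1 * x 2)) * auxTwoEqZero
    rw [hN, zero_div]

end
end

section
/- For a pigment i in P = {1,2,3,4} and distinct pigments j, k, l with {i,j,k,l} = P, the identity (over the fraction field of F_2[X_1,...,X_4]) holds: 1/((X_i+X_j)(X_i+X_k)(X_i+X_l)) = ((E_3 + E_2 E_1) + E_1^2 X_i + E_1 X_i^2)/δ, where δ = ∏_{a<b}(X_a + X_b) and E_m are elementary symmetric polynomials in X_1,...,X_4. -/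
set_option maxHeartbeats 2000000
set_option synthInstance.maxHeartbeats 400000

open MvPolynomial

noncomputable section

/-- The image of the `n`-th elementary symmetric polynomial. -/
def e (n : ℕ) : FractionRing (MvPolynomial (Fin 4) (ZMod 2)) :=
  algebraMap (MvPolynomial (Fin 4) (ZMod 2)) _ (esymm (Fin 4) (ZMod 2) n)

/-- `δ = ∏_{a<b} (X_a + X_b)`. -/
def deltaElt : FractionRing (MvPolynomial (Fin 4) (ZMod 2)) :=
  ∏ p ∈ Finset.univ.filter (fun p : Fin 4 × Fin 4 => p.1 < p.2), (x p.1 + x p.2)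

local notation "F" => FractionRing (MvPolynomial (Fin 4) (ZMod 2))

lemma x_add_ne (a b : Fin 4) (hab : a ≠ b) : x a + x b ≠ 0 := by
  rw [x, x, ← map_add]
  intro hcon
  have h0 : (X a + X b : MvPolynomial (Fin 4) (ZMod 2)) = 0 := by
    apply IsFractionRing.injective (MvPolynomial (Fin 4) (ZMod 2)) F
    rw [hcon, map_zero]
  have := congrArg (MvPolynomial.eval (fun m => if m = a then 1 else 0)) h0
  simp [hab.symm] at this

lemma two_eq_zero : (2 : F) = 0 := by
  haveI : CharP F 2 :=
    charP_of_injective_algebraMap (IsFractionRing.injective (MvPolynomial (Fin 4) (ZMod 2)) F) 2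
  calc (2 : F) = ((2 : ℕ) : F) := by norm_cast
    _ = 0 := CharP.cast_eq_zero F 2

lemma e1_eq : e 1 = x 0 + x 1 + x 2 + x 3 := by
  rw [e, show esymm (Fin 4) (ZMod 2) 1 = X 0 + X 1 + X 2 + X 3 by
    simp [esymm, show (Finset.univ.powersetCard 1 : Finset (Finset (Fin 4))) = {{0},{1},{2},{3}} from by decide]
    ring]
  simp [x, map_add]

lemma e2_eq : e 2 = x 0 * x 1 + x 0 * x 2 + x 0 * x 3 + x 1 * x 2 + x 1 * x 3 + x 2 * x 3 := by
  rw [e, show esymm (Fin 4) (ZMod 2) 2 = X 0 * X 1 + X 0 * X 2 + X 0 * X 3 + X 1 * X 2 + X 1 * X 3 + X 2 * X 3 by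
    simp [esymm, show (Finset.univ.powersetCard 2 : Finset (Finset (Fin 4))) = {{0,1},{0,2},{0,3},{1,2},{1,3},{2,3}} from by decide]
    simp (config := { decide := true }) [Finset.sum_insert, Finset.prod_insert]; ring]
  simp [x, map_add, map_mul]

lemma e3_eq : e 3 = x 0 * x 1 * x 2 + x 0 * x 1 * x 3 + x 0 * x 2 * x 3 + x 1 * x 2 * x 3 := by
  rw [e, show esymm (Fin 4) (ZMod 2) 3 = X 0 * X 1 * X 2 + X 0 * X 1 * X 3 + X 0 * X 2 * X 3 + X 1 * X 2 * X 3 by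
    simp [esymm, show (Finset.univ.powersetCard 3 : Finset (Finset (Fin 4))) = {{0,1,2},{0,1,3},{0,2,3},{1,2,3}} from by decide]
    simp (config := { decide := true }) [Finset.sum_insert, Finset.prod_insert]; ring]
  simp [x, map_add, map_mul]

lemma deltaElt_eq : deltaElt =
    (x 0 + x 1) * ((x 0 + x 2) * ((x 0 + x 3) * ((x 1 + x 2) * ((x 1 + x 3) * (x 2 + x 3))))) := by
  rw [deltaElt, show (Finset.univ.filter (fun p : Fin 4 × Fin 4 => p.1 < p.2)) =
    ({(0,1),(0,2),(0,3),(1,2),(1,3),(2,3)} : Finset (Fin 4 × Fin 4)) from by decide]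
  simp

lemma deltaElt_ne : deltaElt ≠ 0 := by
  rw [deltaElt_eq]
  have h := x_add_ne
  exact mul_ne_zero (h 0 1 (by decide)) (mul_ne_zero (h 0 2 (by decide)) (mul_ne_zero (h 0 3 (by decide)) (mul_ne_zero (h 1 2 (by decide)) (mul_ne_zero (h 1 3 (by decide)) (h 2 3 (by decide))))))

lemma key0 (a b c : Fin 4) (hia : (0 : Fin 4) ≠ a) (hib : (0 : Fin 4) ≠ b) (hic : (0 : Fin 4) ≠ c)
    (hδ : deltaElt = ((e 3 + e 2 * e 1) + e 1 ^ 2 * x 0 + e 1 * x 0 ^ 2) * ((x 0 + x a) * (x 0 + x b) * (x 0 + x c))) :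
    1 / ((x 0 + x a) * (x 0 + x b) * (x 0 + x c)) =
      ((e 3 + e 2 * e 1) + e 1 ^ 2 * x 0 + e 1 * x 0 ^ 2) / deltaElt := by
  rw [div_eq_div_iff (mul_ne_zero (mul_ne_zero (x_add_ne _ _ hia) (x_add_ne _ _ hib)) (x_add_ne _ _ hic)) deltaElt_ne, one_mul, hδ]

lemma key1 (a b c : Fin 4) (hia : (1 : Fin 4) ≠ a) (hib : (1 : Fin 4) ≠ b) (hic : (1 : Fin 4) ≠ c)
    (hδ : deltaElt = ((e 3 + e 2 * e 1) + e 1 ^ 2 * x 1 + e 1 * x 1 ^ 2) * ((x 1 + x a) * (x 1 + x b) * (x 1 + x c))) :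
    1 / ((x 1 + x a) * (x 1 + x b) * (x 1 + x c)) =
      ((e 3 + e 2 * e 1) + e 1 ^ 2 * x 1 + e 1 * x 1 ^ 2) / deltaElt := by
  rw [div_eq_div_iff (mul_ne_zero (mul_ne_zero (x_add_ne _ _ hia) (x_add_ne _ _ hib)) (x_add_ne _ _ hic)) deltaElt_ne, one_mul, hδ]

lemma key2 (a b c : Fin 4) (hia : (2 : Fin 4) ≠ a) (hib : (2 : Fin 4) ≠ b) (hic : (2 : Fin 4) ≠ c)
    (hδ : deltaElt = ((e 3 + e 2 * e 1) + e 1 ^ 2 * x 2 + e 1 * x 2 ^ 2) * ((x 2 + x a) * (x 2 + x b) * (x 2 + x c))) :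
    1 / ((x 2 + x a) * (x 2 + x b) * (x 2 + x c)) =
      ((e 3 + e 2 * e 1) + e 1 ^ 2 * x 2 + e 1 * x 2 ^ 2) / deltaElt := by
  rw [div_eq_div_iff (mul_ne_zero (mul_ne_zero (x_add_ne _ _ hia) (x_add_ne _ _ hib)) (x_add_ne _ _ hic)) deltaElt_ne, one_mul, hδ]

lemma key3 (a b c : Fin 4) (hia : (3 : Fin 4) ≠ a) (hib : (3 : Fin 4) ≠ b) (hic : (3 : Fin 4) ≠ c)
    (hδ : deltaElt = ((e 3 + e 2 * e 1) + e 1 ^ 2 * x 3 + e 1 * x 3 ^ 2) * ((x 3 + x a) * (x 3 + x b) * (x 3 + x c))) :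
    1 / ((x 3 + x a) * (x 3 + x b) * (x 3 + x c)) =
      ((e 3 + e 2 * e 1) + e 1 ^ 2 * x 3 + e 1 * x 3 ^ 2) / deltaElt := by
  rw [div_eq_div_iff (mul_ne_zero (mul_ne_zero (x_add_ne _ _ hia) (x_add_ne _ _ hib)) (x_add_ne _ _ hic)) deltaElt_ne, one_mul, hδ]

lemma main0 : deltaElt = ((e 3 + e 2 * e 1) + e 1 ^ 2 * x 0 + e 1 * x 0 ^ 2) * ((x 0 + x 1) * (x 0 + x 2) * (x 0 + x 3)) := by
  have h2 := two_eq_zero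
  rw [deltaElt_eq, e1_eq, e2_eq, e3_eq]
  linear_combination ((-1 : F) * x 1 ^ 2 * x 2 ^ 2 * x 3 ^ 2 + (-1 : F) * x 0 * x 1 * x 2 * x 3 ^ 3 + (-4 : F) * x 0 * x 1 * x 2 ^ 2 * x 3 ^ 2 + (-1 : F) * x 0 * x 1 * x 2 ^ 3 * x 3 + (-4 : F) * x 0 * x 1 ^ 2 * x 2 * x 3 ^ 2 + (-4 : F) * x 0 * x 1 ^ 2 * x 2 ^ 2 * x 3 + (-1 : F) * x 0 * x 1 ^ 3 * x 2 * x 3 + (-1 : F) * x 0 ^ 2 * x 2 * x 3 ^ 3 + (-3 : F) * x 0 ^ 2 * x 2 ^ 2 * x 3 ^ 2 + (-1 : F) * x 0 ^ 2 * x 2 ^ 3 * x 3 + (-1 : F) * x 0 ^ 2 * x 1 * x 3 ^ 3 + (-10 : F) * x 0 ^ 2 * x 1 * x 2 * x 3 ^ 2 + (-10 : F) * x 0 ^ 2 * x 1 * x 2 ^ 2 * x 3 + (-1 : F) * x 0 ^ 2 * x 1 * x 2 ^ 3 + (-3 : F) * x 0 ^ 2 * x 1 ^ 2 * x 3 ^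 2 + (-10 : F) * x 0 ^ 2 * x 1 ^ 2 * x 2 * x 3 + (-3 : F) * x 0 ^ 2 * x 1 ^ 2 * x 2 ^ 2 + (-1 : F) * x 0 ^ 2 * x 1 ^ 3 * x 3 + (-1 : F) * x 0 ^ 2 * x 1 ^ 3 * x 2 + (-1 : F) * x 0 ^ 3 * x 3 ^ 3 + (-6 : F) * x 0 ^ 3 * x 2 * x 3 ^ 2 + (-6 : F) * x 0 ^ 3 * x 2 ^ 2 * x 3 + (-1 : F) * x 0 ^ 3 * x 2 ^ 3 + (-6 : F) * x 0 ^ 3 * x 1 * x 3 ^ 2 + (-17 : F) * x 0 ^ 3 * x 1 * x 2 * x 3 + (-6 : F) * x 0 ^ 3 * x 1 * x 2 ^ 2 + (-6 : F) * x 0 ^ 3 * x 1 ^ 2 * x 3 + (-6 : F) * x 0 ^ 3 * x 1 ^ 2 * x 2 + (-1 : F) * x 0 ^ 3 * x 1 ^ 3 + (-3 : F) * x 0 ^ 4 * x 3 ^ 2 + (-8 : F) * x 0 ^ 4 * x 2 * x 3 + (-3 : F) * x 0 ^ 4 * x 2 ^ 2 + (-8 : F) * x 0 ^ 4 * x 1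 * x 3 + (-8 : F) * x 0 ^ 4 * x 1 * x 2 + (-3 : F) * x 0 ^ 4 * x 1 ^ 2 + (-3 : F) * x 0 ^ 5 * x 3 + (-3 : F) * x 0 ^ 5 * x 2 + (-3 : F) * x 0 ^ 5 * x 1 + (-1 : F) * x 0 ^ 6) * h2

lemma main1 : deltaElt = ((e 3 + e 2 * e 1) + e 1 ^ 2 * x 1 + e 1 * x 1 ^ 2) * ((x 1 + x 0) * (x 1 + x 2) * (x 1 + x 3)) := by
  have h2 := two_eq_zero
  rw [deltaElt_eq, e1_eq, e2_eq, e3_eq]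
  linear_combination ((-1 : F) * x 1 ^ 2 * x 2 * x 3 ^ 3 + (-3 : F) * x 1 ^ 2 * x 2 ^ 2 * x 3 ^ 2 + (-1 : F) * x 1 ^ 2 * x 2 ^ 3 * x 3 + (-1 : F) * x 1 ^ 3 * x 3 ^ 3 + (-6 : F) * x 1 ^ 3 * x 2 * x 3 ^ 2 + (-6 : F) * x 1 ^ 3 * x 2 ^ 2 * x 3 + (-1 : F) * x 1 ^ 3 * x 2 ^ 3 + (-3 : F) * x 1 ^ 4 * x 3 ^ 2 + (-8 : F) * x 1 ^ 4 * x 2 * x 3 + (-3 : F) * x 1 ^ 4 * x 2 ^ 2 + (-3 : F) * x 1 ^ 5 * x 3 + (-3 : F) * x 1 ^ 5 * x 2 + (-1 : F) * x 1 ^ 6 + (-1 : F) * x 0 * x 1 * x 2 * x 3 ^ 3 + (-4 : F) * x 0 * x 1 * x 2 ^ 2 * x 3 ^ 2 + (-1 : F) * x 0 * x 1 * x 2 ^ 3 * x 3 + (-1 : F) * x 0 * x 1 ^ 2 * x 3 ^ 3 + (-10 : F) * x 0 * x 1 ^ 2 * x 2 * x 3 ^ 2 + (-10 : F) * x 0 *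 x 1 ^ 2 * x 2 ^ 2 * x 3 + (-1 : F) * x 0 * x 1 ^ 2 * x 2 ^ 3 + (-6 : F) * x 0 * x 1 ^ 3 * x 3 ^ 2 + (-17 : F) * x 0 * x 1 ^ 3 * x 2 * x 3 + (-6 : F) * x 0 * x 1 ^ 3 * x 2 ^ 2 + (-8 : F) * x 0 * x 1 ^ 4 * x 3 + (-8 : F) * x 0 * x 1 ^ 4 * x 2 + (-3 : F) * x 0 * x 1 ^ 5 + (-1 : F) * x 0 ^ 2 * x 2 ^ 2 * x 3 ^ 2 + (-4 : F) * x 0 ^ 2 * x 1 * x 2 * x 3 ^ 2 + (-4 : F) * x 0 ^ 2 * x 1 * x 2 ^ 2 * x 3 + (-3 : F) * x 0 ^ 2 * x 1 ^ 2 * x 3 ^ 2 + (-10 : F) * x 0 ^ 2 * x 1 ^ 2 * x 2 * x 3 + (-3 : F) * x 0 ^ 2 * x 1 ^ 2 * x 2 ^ 2 + (-6 : F) * x 0 ^ 2 * x 1 ^ 3 * x 3 + (-6 : F) * x 0 ^ 2 * x 1 ^ 3 * x 2 + (-3 : F) * x 0 ^ 2 * x 1 ^ 4 + (-1 : F) *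 x 0 ^ 3 * x 1 * x 2 * x 3 + (-1 : F) * x 0 ^ 3 * x 1 ^ 2 * x 3 + (-1 : F) * x 0 ^ 3 * x 1 ^ 2 * x 2 + (-1 : F) * x 0 ^ 3 * x 1 ^ 3) * h2

lemma main2 : deltaElt = ((e 3 + e 2 * e 1) + e 1 ^ 2 * x 2 + e 1 * x 2 ^ 2) * ((x 2 + x 0) * (x 2 + x 1) * (x 2 + x 3)) := by
  have h2 := two_eq_zero
  rw [deltaElt_eq, e1_eq, e2_eq, e3_eq]
  linear_combination ((-1 : F) * x 2 ^ 3 * x 3 ^ 3 + (-3 : F) * x 2 ^ 4 * x 3 ^ 2 + (-3 : F) * x 2 ^ 5 * x 3 + (-1 : F) * x 2 ^ 6 + (-1 : F) * x 1 * x 2 ^ 2 * x 3 ^ 3 + (-6 : F) * x 1 * x 2 ^ 3 * x 3 ^ 2 + (-8 : F) * x 1 * x 2 ^ 4 * x 3 + (-3 : F) * x 1 * x 2 ^ 5 + (-3 : F) * x 1 ^ 2 * x 2 ^ 2 * x 3 ^ 2 + (-6 : F) * x 1 ^ 2 * x 2 ^ 3 * x 3 + (-3 : F) * x 1 ^ 2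 * x 2 ^ 4 + (-1 : F) * x 1 ^ 3 * x 2 ^ 2 * x 3 + (-1 : F) * x 1 ^ 3 * x 2 ^ 3 + (-1 : F) * x 0 * x 2 ^ 2 * x 3 ^ 3 + (-6 : F) * x 0 * x 2 ^ 3 * x 3 ^ 2 + (-8 : F) * x 0 * x 2 ^ 4 * x 3 + (-3 : F) * x 0 * x 2 ^ 5 + (-1 : F) * x 0 * x 1 * x 2 * x 3 ^ 3 + (-10 : F) * x 0 * x 1 * x 2 ^ 2 * x 3 ^ 2 + (-17 : F) * x 0 * x 1 * x 2 ^ 3 * x 3 + (-8 : F) * x 0 * x 1 * x 2 ^ 4 + (-4 : F) * x 0 * x 1 ^ 2 * x 2 * x 3 ^ 2 + (-10 : F) * x 0 * x 1 ^ 2 * x 2 ^ 2 * x 3 + (-6 : F) * x 0 * x 1 ^ 2 * x 2 ^ 3 + (-1 : F) * x 0 * x 1 ^ 3 * x 2 * x 3 + (-1 : F) * x 0 * x 1 ^ 3 * x 2 ^ 2 + (-3 : F) * x 0 ^ 2 * x 2 ^ 2 * x 3 ^ 2 + (-6 : F) * x 0 ^ 2 * x 2 ^ 3 * x 3 + (-3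 : F) * x 0 ^ 2 * x 2 ^ 4 + (-4 : F) * x 0 ^ 2 * x 1 * x 2 * x 3 ^ 2 + (-10 : F) * x 0 ^ 2 * x 1 * x 2 ^ 2 * x 3 + (-6 : F) * x 0 ^ 2 * x 1 * x 2 ^ 3 + (-1 : F) * x 0 ^ 2 * x 1 ^ 2 * x 3 ^ 2 + (-4 : F) * x 0 ^ 2 * x 1 ^ 2 * x 2 * x 3 + (-3 : F) * x 0 ^ 2 * x 1 ^ 2 * x 2 ^ 2 + (-1 : F) * x 0 ^ 3 * x 2 ^ 2 * x 3 + (-1 : F) * x 0 ^ 3 * x 2 ^ 3 + (-1 : F) * x 0 ^ 3 * x 1 * x 2 * x 3 + (-1 : F) * x 0 ^ 3 * x 1 * x 2 ^ 2) * h2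

lemma main3 : deltaElt = ((e 3 + e 2 * e 1) + e 1 ^ 2 * x 3 + e 1 * x 3 ^ 2) * ((x 3 + x 0) * (x 3 + x 1) * (x 3 + x 2)) := by
  have h2 := two_eq_zero
  rw [deltaElt_eq, e1_eq, e2_eq, e3_eq]
  linear_combination ((-1 : F) * x 3 ^ 6 + (-3 : F) * x 2 * x 3 ^ 5 + (-3 : F) * x 2 ^ 2 * x 3 ^ 4 + (-1 : F) * x 2 ^ 3 * x 3 ^ 3 + (-3 : F) * x 1 * x 3 ^ 5 + (-8 : F) * x 1 * x 2 * x 3 ^ 4 + (-6 : F) * x 1 * x 2 ^ 2 * x 3 ^ 3 + (-1 : F) * x 1 * x 2 ^ 3 * x 3 ^ 2 + (-3 : F) * x 1 ^ 2 * x 3 ^ 4 + (-6 : F) * x 1 ^ 2 * x 2 * x 3 ^ 3 + (-3 : F) * x 1 ^ 2 * x 2 ^ 2 * x 3 ^ 2 + (-1 : F) * x 1 ^ 3 * x 3 ^ 3 + (-1 : F) * x 1 ^ 3 * x 2 * x 3 ^ 2 + (-3 : F) * x 0 * x 3 ^ 5 + (-8 : F) * x 0 * x 2 * x 3 ^ 4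 + (-6 : F) * x 0 * x 2 ^ 2 * x 3 ^ 3 + (-1 : F) * x 0 * x 2 ^ 3 * x 3 ^ 2 + (-8 : F) * x 0 * x 1 * x 3 ^ 4 + (-17 : F) * x 0 * x 1 * x 2 * x 3 ^ 3 + (-10 : F) * x 0 * x 1 * x 2 ^ 2 * x 3 ^ 2 + (-1 : F) * x 0 * x 1 * x 2 ^ 3 * x 3 + (-6 : F) * x 0 * x 1 ^ 2 * x 3 ^ 3 + (-10 : F) * x 0 * x 1 ^ 2 * x 2 * x 3 ^ 2 + (-4 : F) * x 0 * x 1 ^ 2 * x 2 ^ 2 * x 3 + (-1 : F) * x 0 * x 1 ^ 3 * x 3 ^ 2 + (-1 : F) * x 0 * x 1 ^ 3 * x 2 * x 3 + (-3 : F) * x 0 ^ 2 * x 3 ^ 4 + (-6 : F) * x 0 ^ 2 * x 2 * x 3 ^ 3 + (-3 : F) * x 0 ^ 2 * x 2 ^ 2 * x 3 ^ 2 + (-6 : F) * x 0 ^ 2 * x 1 * x 3 ^ 3 + (-10 : F) * x 0 ^ 2 * x 1 * x 2 * x 3 ^ 2 + (-4 : F) * x 0 ^ 2 * x 1 * x 2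 ^ 2 * x 3 + (-3 : F) * x 0 ^ 2 * x 1 ^ 2 * x 3 ^ 2 + (-4 : F) * x 0 ^ 2 * x 1 ^ 2 * x 2 * x 3 + (-1 : F) * x 0 ^ 2 * x 1 ^ 2 * x 2 ^ 2 + (-1 : F) * x 0 ^ 3 * x 3 ^ 3 + (-1 : F) * x 0 ^ 3 * x 2 * x 3 ^ 2 + (-1 : F) * x 0 ^ 3 * x 1 * x 3 ^ 2 + (-1 : F) * x 0 ^ 3 * x 1 * x 2 * x 3) * h2

/-- The hollow dot identity: for a pigment `i` and distinct pigments `j,k,l`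
with `{i,j,k,l} = {1,2,3,4}`, in the fraction field of `F₂[X₁,…,X₄]` one has
`1/((Xᵢ+Xⱼ)(Xᵢ+Xₖ)(Xᵢ+Xₗ)) = ((E₃ + E₂E₁) + E₁²Xᵢ + E₁Xᵢ²)/δ`. -/
theorem hollow_dot_thin_identity (i j k l : Fin 4)
    (h : ({i, j, k, l} : Finset (Fin 4)) = Finset.univ) :
    1 / ((x i + x j) * (x i + x k) * (x i + x l)) =
      ((e 3 + e 2 * e 1) + e 1 ^ 2 * x i + e 1 * x i ^ 2) / deltaElt := by
  fin_cases i <;> fin_cases j <;> fin_cases k <;> fin_cases l <;>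
    first
    | exact absurd h (by decide)
    | exact key0 1 2 3 (by decide) (by decide) (by decide) (by rw [main0]; try ring)
    | exact key0 1 3 2 (by decide) (by decide) (by decide) (by rw [main0]; try ring)
    | exact key0 2 1 3 (by decide) (by decide) (by decide) (by rw [main0]; try ring)
    | exact key0 2 3 1 (by decide) (by decide) (by decide) (by rw [main0]; try ring)
    | exact key0 3 1 2 (by decide) (by decide) (by decide) (by rw [main0]; try ring)
    | exact key0 3 2 1 (by decide) (by decide) (by decide) (by rw [main0]; try ring)
    | exact key1 0 2 3 (by decide) (by decide) (by decide) (by rw [main1]; try ring)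
    | exact key1 0 3 2 (by decide) (by decide) (by decide) (by rw [main1]; try ring)
    | exact key1 2 0 3 (by decide) (by decide) (by decide) (by rw [main1]; try ring)
    | exact key1 2 3 0 (by decide) (by decide) (by decide) (by rw [main1]; try ring)
    | exact key1 3 0 2 (by decide) (by decide) (by decide) (by rw [main1]; try ring)
    | exact key1 3 2 0 (by decide) (by decide) (by decide) (by rw [main1]; try ring)
    | exact key2 0 1 3 (by decide) (by decide) (by decide) (by rw [main2]; try ring)
    | exact key2 0 3 1 (by decide) (by decide) (by decide) (by rw [main2]; try ring)
    | exact key2 1 0 3 (by decide) (by decide) (by decide) (by rw [main2]; try ring)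
    | exact key2 1 3 0 (by decide) (by decide) (by decide) (by rw [main2]; try ring)
    | exact key2 3 0 1 (by decide) (by decide) (by decide) (by rw [main2]; try ring)
    | exact key2 3 1 0 (by decide) (by decide) (by decide) (by rw [main2]; try ring)
    | exact key3 0 1 2 (by decide) (by decide) (by decide) (by rw [main3]; try ring)
    | exact key3 0 2 1 (by decide) (by decide) (by decide) (by rw [main3]; try ring)
    | exact key3 1 0 2 (by decide) (by decide) (by decide) (by rw [main3]; try ring)
    | exact key3 1 2 0 (by decide) (by decide) (by decide) (by rw [main3]; try ring)
    | exact key3 2 0 1 (by decide) (by decide) (by decide) (by rw [main3]; try ring)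
    | exact key3 2 1 0 (by decide) (by decide) (by decide) (by rw [main3]; try ring)

end
end

section
/- Tutte-like relation for four-colorings at a crossing: the number of colorings of a web containing two 1-strands joined by a thick edge (a horizontal H-piece) plus the number of colorings of the web with this local piece replaced by two vertical parallel 1-edges equals the number of colorings with the piece replaced by a vertical H-piece plus the number with two horizontal parallel 1-edges, where all four webs agree outside a disk and have four thin boundary points on the disk. -/
/-- Colorings of the horizontal H-piece: boundary thin points NW, NE, SW, SE
colored `a, b, c, d`; two 112-vertices joined by a thick edge `Y`, the left one
joining NW and SW, the right one joining NE and SE. -/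
def hHorizCount (a b c d : Fin 4) : ℕ :=
  (Finset.univ.filter (fun Y : Finset (Fin 4) =>
    Y = ({a, c} : Finset (Fin 4)) ∧ a ≠ c ∧ Y = ({b, d} : Finset (Fin 4)) ∧ b ≠ d)).card

/-- Colorings of the vertical H-piece: the thick edge joins a top 112-vertex
(NW, NE) and a bottom one (SW, SE). -/
def hVertCount (a b c d : Fin 4) : ℕ :=
  (Finset.univ.filter (fun Y : Finset (Fin 4) =>
    Y = ({a, b} : Finset (Fin 4)) ∧ a ≠ b ∧ Y = ({c, d} : Finset (Fin 4)) ∧ c ≠ d)).card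

/-- Colorings of two vertical parallel 1-edges (NW–SW and NE–SE). -/
def vertLinesCount (a b c d : Fin 4) : ℕ := if a = c ∧ b = d then 1 else 0

/-- Colorings of two horizontal parallel 1-edges (NW–NE and SW–SE). -/
def horizLinesCount (a b c d : Fin 4) : ℕ := if a = b ∧ c = d then 1 else 0

/-- Tutte-like relation: for every assignment of pigments to the four thin
boundary points the local coloring counts satisfy
`Hh + vertical lines = Hv + horizontal lines`; consequently, for webs agreeing
outside the disk (encoded by an arbitrary weight `w` counting the outside
colorings for each boundary assignment), the numbers of colorings satisfy
`t₄(H-horizontal) + t₄(vertical lines) = t₄(H-vertical) + t₄(horizontal lines)`. -/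
theorem tutte_relation_crossing :
    (∀ a b c d : Fin 4,
      hHorizCount a b c d + vertLinesCount a b c d =
        hVertCount a b c d + horizLinesCount a b c d) ∧
    (∀ w : Fin 4 → Fin 4 → Fin 4 → Fin 4 → ℕ,
      (∑ q : Fin 4 × Fin 4 × Fin 4 × Fin 4,
          w q.1 q.2.1 q.2.2.1 q.2.2.2 * hHorizCount q.1 q.2.1 q.2.2.1 q.2.2.2) +
      (∑ q : Fin 4 × Fin 4 × Fin 4 × Fin 4,
          w q.1 q.2.1 q.2.2.1 q.2.2.2 * vertLinesCount q.1 q.2.1 q.2.2.1 q.2.2.2) =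
      (∑ q : Fin 4 × Fin 4 × Fin 4 × Fin 4,
          w q.1 q.2.1 q.2.2.1 q.2.2.2 * hVertCount q.1 q.2.1 q.2.2.1 q.2.2.2) +
      (∑ q : Fin 4 × Fin 4 × Fin 4 × Fin 4,
          w q.1 q.2.1 q.2.2.1 q.2.2.2 * horizLinesCount q.1 q.2.1 q.2.2.1 q.2.2.2)) := by
  have h : ∀ a b c d : Fin 4,
      hHorizCount a b c d + vertLinesCount a b c d =
        hVertCount a b c d + horizLinesCount a b c d := by decide
  refine ⟨h, fun w => ?_⟩
  rw [← Finset.sum_add_distrib, ← Finset.sum_add_distrib]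
  exact Finset.sum_congr rfl fun q _ => by rw [← Nat.mul_add, ← Nat.mul_add, h]
end

section
/- Local square relation for four-colorings: for webs agreeing outside a disk with two thin and two thick boundary edges, the number of colorings of the web containing a square with edges of thicknesses 1,2,1,2 (alternating) equals the number of colorings of the web with the square replaced by a dumbbell with two defects plus the number with the square replaced by two disjoint arcs (one thin, one thick). Explicitly, for each boundary coloring (i, ij, i, ij): 1 = 0 + 1; (k, ij, k, ij): 2 = 1 + 1; (j, ij, k, ik): 0 = 0 + 0; (k, ij, j, ik): 1 = 1 + 0, where {i,j,k,l} = {1,2,3,4}. -/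
set_option maxRecDepth 100000
set_option maxHeartbeats 4000000
set_option synthInstance.maxHeartbeats 1000000
set_option synthInstance.maxSize 4096


/-- Colorings of the square web with two thin boundary colors `a, c` and two
thick boundary colors `B, D`: internal thin edges `xt, xr, xb` and a thick edge
`Y`, with the 112-vertex condition (thick color = disjoint union of the two thin
colors) at each of the four corners. -/
def squareColoringCount (a c : Fin 4) (B D : Finset (Fin 4)) : ℕ :=
  (Finset.univ.filter (fun q : Fin 4 × Fin 4 × Fin 4 × Finset (Fin 4) =>
    q.2.2.2 = ({a, q.1} : Finset (Fin 4)) ∧ a ≠ q.1 ∧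
    q.2.2.2 = ({c, q.2.2.1} : Finset (Fin 4)) ∧ c ≠ q.2.2.1 ∧
    B = ({q.1, q.2.1} : Finset (Fin 4)) ∧ q.1 ≠ q.2.1 ∧
    D = ({q.2.2.1, q.2.1} : Finset (Fin 4)) ∧ q.2.2.1 ≠ q.2.1)).card

/-- Colorings of the dumbbell web with two defects: a thin bar colored `{x}`,
two 112-vertices producing thick colors `{a,x}` and `{c,x}`, each followed by a
defect (complementation) before reaching the thick boundary colors `B` and `D`. -/
def dumbbellColoringCount (a c : Fin 4) (B D : Finset (Fin 4)) : ℕ :=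
  (Finset.univ.filter (fun x : Fin 4 =>
    a ≠ x ∧ B = ({a, x} : Finset (Fin 4))ᶜ ∧
    c ≠ x ∧ D = ({c, x} : Finset (Fin 4))ᶜ)).card

/-- Colorings of the two disjoint arcs (one thin connecting the thin boundary
points, one thick connecting the thick boundary points). -/
def arcsColoringCount (a c : Fin 4) (B D : Finset (Fin 4)) : ℕ :=
  if a = c ∧ B = D then 1 else 0


def sqP (a c x y u v : Fin 4) : ℕ :=
  (Finset.univ.filter (fun r : Fin 4 × Fin 4 × Fin 4 =>
    ((a = c ∧ r.1 = r.2.2) ∨ (a = r.2.2 ∧ r.1 = c)) ∧ a ≠ r.1 ∧ c ≠ r.2.2 ∧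
    ((x = r.1 ∧ y = r.2.1) ∨ (x = r.2.1 ∧ y = r.1)) ∧ r.1 ≠ r.2.1 ∧
    ((u = r.2.2 ∧ v = r.2.1) ∨ (u = r.2.1 ∧ v = r.2.2)) ∧ r.2.2 ≠ r.2.1)).card

def dbP (a c x y u v : Fin 4) : ℕ :=
  (Finset.univ.filter (fun t : Fin 4 =>
    a ≠ t ∧ (x ≠ y ∧ a ≠ t ∧ x ≠ a ∧ x ≠ t ∧ y ≠ a ∧ y ≠ t) ∧
    c ≠ t ∧ (u ≠ v ∧ c ≠ t ∧ u ≠ c ∧ u ≠ t ∧ v ≠ c ∧ v ≠ t))).card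

def arcsP (a c x y u v : Fin 4) : ℕ :=
  if a = c ∧ ((x = u ∧ y = v) ∨ (x = v ∧ y = u)) then 1 else 0

lemma pair_eq_iff : ∀ a b c d : Fin 4,
    ({a, b} : Finset (Fin 4)) = {c, d} ↔ ((a = c ∧ b = d) ∨ (a = d ∧ b = c)) := by decide

lemma pair_eq_compl_iff : ∀ u v c d : Fin 4,
    ({u, v} : Finset (Fin 4)) = ({c, d} : Finset (Fin 4))ᶜ ↔
      (u ≠ v ∧ c ≠ d ∧ u ≠ c ∧ u ≠ d ∧ v ≠ c ∧ v ≠ d) := by decide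

lemma sq_eq (a c x y u v : Fin 4) :
    squareColoringCount a c {x, y} {u, v} = sqP a c x y u v := by
  unfold squareColoringCount sqP
  refine Finset.card_nbij' (fun q => (q.1, q.2.1, q.2.2.1))
      (fun r => (r.1, r.2.1, r.2.2, ({a, r.1} : Finset (Fin 4)))) ?_ ?_ ?_ ?_
  · intro q hq
    simp only [Finset.mem_coe, Finset.mem_filter, Finset.mem_univ, true_and, pair_eq_iff] at hq ⊢
    obtain ⟨h1, h2, h3, h4, h5, h6, h7, h8⟩ := hq
    rw [h1, pair_eq_iff] at h3
    tauto
  · intro r hr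
    simp only [Finset.mem_coe, Finset.mem_filter, Finset.mem_univ, true_and] at hr ⊢
    simp only [pair_eq_iff] at hr ⊢
    tauto
  · intro q hq
    simp only [Finset.mem_coe, Finset.mem_filter, Finset.mem_univ, true_and] at hq
    obtain ⟨h1, -⟩ := hq
    exact Prod.ext rfl (Prod.ext rfl (Prod.ext rfl h1.symm))
  · intro r _
    rfl

lemma db_eq (a c x y u v : Fin 4) :
    dumbbellColoringCount a c {x, y} {u, v} = dbP a c x y u v := by
  unfold dumbbellColoringCount dbP
  congr 1
  apply Finset.filter_congr
  intro t _
  simp only [pair_eq_compl_iff]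

lemma arcs_eq (a c x y u v : Fin 4) :
    arcsColoringCount a c {x, y} {u, v} = arcsP a c x y u v := by
  unfold arcsColoringCount arcsP
  simp only [pair_eq_iff]

lemma part1' : ∀ a c x y u v : Fin 4, x ≠ y → u ≠ v →
    sqP a c x y u v = dbP a c x y u v + arcsP a c x y u v := by decide

lemma distinct_of_univ : ∀ i j k l : Fin 4, ({i, j, k, l} : Finset (Fin 4)) = Finset.univ →
    i ≠ j ∧ i ≠ k ∧ i ≠ l ∧ j ≠ k ∧ j ≠ l ∧ k ≠ l := by decide

lemma part2' : ∀ i j k l : Fin 4, i ≠ j → i ≠ k → i ≠ l → j ≠ k → j ≠ l → k ≠ l →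
    (sqP i i i j i j = 1 ∧ dbP i i i j i j = 0 ∧ arcsP i i i j i j = 1) ∧
    (sqP k k i j i j = 2 ∧ dbP k k i j i j = 1 ∧ arcsP k k i j i j = 1) ∧
    (sqP j k i j i k = 0 ∧ dbP j k i j i k = 0 ∧ arcsP j k i j i k = 0) ∧
    (sqP k j i j i k = 1 ∧ dbP k j i j i k = 1 ∧ arcsP k j i j i k = 0) := by decide

/-- Local square relation for four-colorings: the number of colorings of the
square equals the number for the dumbbell with two defects plus the number for
the two disjoint arcs, for every boundary coloring; explicitly, for boundary
colorings `(i, ij, i, ij)`: `1 = 0 + 1`; `(k, ij, k, ij)`: `2 = 1 + 1`;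
`(j, ij, k, ik)`: `0 = 0 + 0`; `(k, ij, j, ik)`: `1 = 1 + 0`,
where `{i,j,k,l} = {1,2,3,4}`. -/
theorem square_skein_relation :
    (∀ (a c : Fin 4) (B D : Finset (Fin 4)), B.card = 2 → D.card = 2 →
      squareColoringCount a c B D =
        dumbbellColoringCount a c B D + arcsColoringCount a c B D) ∧
    (∀ i j k l : Fin 4, ({i, j, k, l} : Finset (Fin 4)) = Finset.univ →
      (squareColoringCount i i {i, j} {i, j} = 1 ∧
        dumbbellColoringCount i i {i, j} {i, j} = 0 ∧
        arcsColoringCount i i {i, j} {i, j} = 1) ∧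
      (squareColoringCount k k {i, j} {i, j} = 2 ∧
        dumbbellColoringCount k k {i, j} {i, j} = 1 ∧
        arcsColoringCount k k {i, j} {i, j} = 1) ∧
      (squareColoringCount j k {i, j} {i, k} = 0 ∧
        dumbbellColoringCount j k {i, j} {i, k} = 0 ∧
        arcsColoringCount j k {i, j} {i, k} = 0) ∧
      (squareColoringCount k j {i, j} {i, k} = 1 ∧
        dumbbellColoringCount k j {i, j} {i, k} = 1 ∧
        arcsColoringCount k j {i, j} {i, k} = 0)) := by
  constructor
  · intro a c B D hB hD
    obtain ⟨x, y, hxy, rfl⟩ := Finset.card_eq_two.mp hB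
    obtain ⟨u, v, huv, rfl⟩ := Finset.card_eq_two.mp hD
    rw [sq_eq, db_eq, arcs_eq]
    exact part1' a c x y u v hxy huv
  · intro i j k l h
    obtain ⟨h1, h2, h3, h4, h5, h6⟩ := distinct_of_univ i j k l h
    have := part2' i j k l h1 h2 h3 h4 h5 h6
    simpa only [sq_eq, db_eq, arcs_eq] using this
end

section
/- Collapsing a triangle of type 112-112-112 with thin sides attached to a 222-vertex configuration preserves the number of 4-colorings: for each assignment of three 2-element subsets forming the 2-element subsets of a common 3-element subset of {1,2,3,4} to the three external thick edges, there is exactly one coloring of the internal triangle of thin edges compatible with all three 112-vertex conditions. -/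
/-- Collapsing a 112-112-112 triangle preserves four-colorings: for every
assignment of three 2-element subsets `B₁, B₂, B₃` to the external thick edges
that form the three 2-element subsets of a common 3-element subset `T` of the
pigments, there is exactly one coloring `(x₁₂, x₂₃, x₃₁)` of the three thin
triangle edges satisfying the 112-vertex condition (thick color = disjoint
union of the adjacent thin colors) at each of the three vertices. -/
theorem triangle_collapse_unique_coloring (T : Finset (Fin 4)) (hT : T.card = 3)
    (B1 B2 B3 : Finset (Fin 4))
    (hB : ({B1, B2, B3} : Finset (Finset (Fin 4))) = Finset.powersetCard 2 T) :
    (Finset.univ.filter (fun x : Fin 4 × Fin 4 × Fin 4 =>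
      B1 = ({x.2.2, x.1} : Finset (Fin 4)) ∧ x.2.2 ≠ x.1 ∧
      B2 = ({x.1, x.2.1} : Finset (Fin 4)) ∧ x.1 ≠ x.2.1 ∧
      B3 = ({x.2.1, x.2.2} : Finset (Fin 4)) ∧ x.2.1 ≠ x.2.2)).card = 1 := by
  -- each Bi is a 2-subset of T
  have hmem : ∀ B ∈ ({B1, B2, B3} : Finset (Finset (Fin 4))), B ⊆ T ∧ B.card = 2 := by
    intro B hBm
    rw [hB, Finset.mem_powersetCard] at hBm
    exact hBm
  have h1 := hmem B1 (by simp)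
  have h2 := hmem B2 (by simp)
  have h3 := hmem B3 (by simp)
  -- the three sets are pairwise distinct
  have hcard3 : ({B1, B2, B3} : Finset (Finset (Fin 4))).card = 3 := by
    rw [hB, Finset.card_powersetCard, hT]; rfl
  have hpairle : ∀ a b : Finset (Fin 4), ({a, b} : Finset (Finset (Fin 4))).card ≤ 2 := by
    intro a b
    have := Finset.card_insert_le a ({b} : Finset (Finset (Fin 4)))
    simpa using this
  have hne : B1 ≠ B2 ∧ B2 ≠ B3 ∧ B1 ≠ B3 := by
    refine ⟨?_, ?_, ?_⟩ <;> intro h <;> rw [h] at hcard3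
    · have hsub : ({B2, B2, B3} : Finset (Finset (Fin 4))) ⊆ {B2, B3} := by
        intro x hx; simp at hx ⊢; tauto
      have := le_trans (Finset.card_le_card hsub) (hpairle B2 B3); omega
    · have hsub : ({B1, B3, B3} : Finset (Finset (Fin 4))) ⊆ {B1, B3} := by
        intro x hx; simp at hx ⊢; tauto
      have := le_trans (Finset.card_le_card hsub) (hpairle B1 B3); omega
    · have hsub : ({B3, B2, B3} : Finset (Finset (Fin 4))) ⊆ {B2, B3} := by
        intro x hx; simp at hx ⊢; tauto
      have := le_trans (Finset.card_le_card hsub) (hpairle B2 B3); omega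
  -- pairwise intersections have card 1
  have hint : ∀ A B : Finset (Fin 4), A ⊆ T → B ⊆ T → A.card = 2 → B.card = 2 →
      A ≠ B → (A ∩ B).card = 1 := by
    intro A B hAT hBT hA hB hAB
    have hu : (A ∪ B).card ≤ 3 := hT ▸ Finset.card_le_card (Finset.union_subset hAT hBT)
    have hie : (A ∪ B).card + (A ∩ B).card = A.card + B.card :=
      Finset.card_union_add_card_inter A B
    have hle : (A ∩ B).card ≤ 2 := hA ▸ Finset.card_le_card Finset.inter_subset_left
    rcases Nat.lt_or_ge (A ∩ B).card 2 with h | h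
    · omega
    · exfalso
      have : A ∩ B = A := Finset.eq_of_subset_of_card_le Finset.inter_subset_left (by omega)
      have hAsub : A ⊆ B := by rw [← this]; exact Finset.inter_subset_right
      exact hAB (Finset.eq_of_subset_of_card_le hAsub (by omega))
  have h12 := hint B1 B2 h1.1 h2.1 h1.2 h2.2 hne.1
  have h23 := hint B2 B3 h2.1 h3.1 h2.2 h3.2 hne.2.1
  have h31 := hint B3 B1 h3.1 h1.1 h3.2 h1.2 (Ne.symm hne.2.2)
  obtain ⟨x1, hx1⟩ := Finset.card_eq_one.mp h12
  obtain ⟨x2, hx2⟩ := Finset.card_eq_one.mp h23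
  obtain ⟨x3, hx3⟩ := Finset.card_eq_one.mp h31
  have hx1B1 : x1 ∈ B1 := (Finset.mem_inter.mp (hx1 ▸ Finset.mem_singleton_self x1)).1
  have hx1B2 : x1 ∈ B2 := (Finset.mem_inter.mp (hx1 ▸ Finset.mem_singleton_self x1)).2
  have hx2B2 : x2 ∈ B2 := (Finset.mem_inter.mp (hx2 ▸ Finset.mem_singleton_self x2)).1
  have hx2B3 : x2 ∈ B3 := (Finset.mem_inter.mp (hx2 ▸ Finset.mem_singleton_self x2)).2
  have hx3B3 : x3 ∈ B3 := (Finset.mem_inter.mp (hx3 ▸ Finset.mem_singleton_self x3)).1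
  have hx3B1 : x3 ∈ B1 := (Finset.mem_inter.mp (hx3 ▸ Finset.mem_singleton_self x3)).2
  -- no element in all three
  have hnotall : ∀ x : Fin 4, x ∈ B1 → x ∈ B2 → x ∈ B3 → False := by
    intro x hb1 hb2 hb3
    have hu23 : B2 ∪ B3 = T := by
      apply Finset.eq_of_subset_of_card_le (Finset.union_subset h2.1 h3.1)
      have := Finset.card_union_add_card_inter B2 B3
      omega
    have hx12 : x ∈ B1 ∩ B2 := Finset.mem_inter.mpr ⟨hb1, hb2⟩
    have hx13 : x ∈ B3 ∩ B1 := Finset.mem_inter.mpr ⟨hb3, hb1⟩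
    have hB1eq : B1 ⊆ {x} := by
      intro y hy
      have hyT : y ∈ B2 ∪ B3 := hu23 ▸ h1.1 hy
      rcases Finset.mem_union.mp hyT with h | h
      · have : y ∈ B1 ∩ B2 := Finset.mem_inter.mpr ⟨hy, h⟩
        rw [hx1] at this hx12
        simp_all
      · have : y ∈ B3 ∩ B1 := Finset.mem_inter.mpr ⟨h, hy⟩
        rw [hx3] at this hx13
        simp_all
    have := Finset.card_le_card hB1eq
    simp [h1.2] at this
  have hne31 : x3 ≠ x1 := fun h => hnotall x1 hx1B1 hx1B2 (h ▸ hx3B3)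
  have hne12 : x1 ≠ x2 := fun h => hnotall x1 hx1B1 hx1B2 (h ▸ hx2B3)
  have hne23 : x2 ≠ x3 := fun h => hnotall x2 (h ▸ hx3B1) hx2B2 hx2B3
  -- a 2-set containing two distinct elements is that pair
  have hpair : ∀ (B : Finset (Fin 4)) (a b : Fin 4), B.card = 2 → a ∈ B → b ∈ B →
      a ≠ b → B = {a, b} := by
    intro B a b hBc ha hb hab
    refine (Finset.eq_of_subset_of_card_le ?_ ?_).symm
    · intro y hy
      rcases Finset.mem_insert.mp hy with h | h
      · exact h ▸ ha
      · exact (Finset.mem_singleton.mp h) ▸ hb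
    · rw [hBc, Finset.card_insert_of_notMem (by simpa using hab), Finset.card_singleton]
  rw [Finset.card_eq_one]
  refine ⟨(x1, x2, x3), ?_⟩
  ext ⟨y1, y2, y3⟩
  simp only [Finset.mem_filter, Finset.mem_univ, true_and, Finset.mem_singleton,
    Prod.mk.injEq]
  constructor
  · rintro ⟨e1, d1, e2, d2, e3, d3⟩
    have hy1 : y1 ∈ B1 ∩ B2 := Finset.mem_inter.mpr ⟨by rw [e1]; simp, by rw [e2]; simp⟩
    have hy2 : y2 ∈ B2 ∩ B3 := Finset.mem_inter.mpr ⟨by rw [e2]; simp, by rw [e3]; simp⟩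
    have hy3 : y3 ∈ B3 ∩ B1 := Finset.mem_inter.mpr ⟨by rw [e3]; simp, by rw [e1]; simp⟩
    rw [hx1, Finset.mem_singleton] at hy1
    rw [hx2, Finset.mem_singleton] at hy2
    rw [hx3, Finset.mem_singleton] at hy3
    exact ⟨hy1, hy2, hy3⟩
  · rintro ⟨rfl, rfl, rfl⟩
    exact ⟨hpair B1 y3 y1 h1.2 hx3B1 hx1B1 hne31, hne31,
           hpair B2 y1 y2 h2.2 hx1B2 hx2B2 hne12, hne12,
           hpair B3 y2 y3 h3.2 hx2B3 hx3B3 hne23, hne23⟩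
end
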